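/- Davie's lemma: let ω be a Brjuno number with λ = e^{2πiω} and convergent denominators (q_k), and define K(n) = n log 2 + ∑_{k=0}^{k(n)} g_k(n) log(2q_{k+1}) where k(n) satisfies q_{k(n)} ≤ n < q_{k(n)+1} and g_k are the nonnegative functions of Davie satisfying g_k(0)=0, g_k(n) ≤ (1+η_k)n/q_k with η_k = q_k/max(q_k, q_{k+1}/4), superadditivity g_k(n_1)+g_k(n_2) ≤ g_k(n_1+n_2), and g_k(n) ≥ g_k(n−1)+1 whenever n ∈ A_k = {m ≥ 0 : ‖mω‖ ≤ 1/(8q_k)}, n > 0. Then: (1) there is a universal constant γ_3 > 0 with K(n) ≤ n(∑_{k=0}^{k(n)} (log q_{k+1})/q_k + γ_3); (2) K(n_1) + K(n_2) ≤ K(n_1+n_2); (3) −log|λ^n − 1| ≤ K(n) − K(n−1). -/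

import Mathlib

open Finset Filter


/-- The iterated fractional parts of the Gauss continued fraction algorithm:
`gaussIter ω n = ω_n`. -/
noncomputable def gaussIter (ω : ℝ) : ℕ → ℝ
  | 0 => Int.fract ω
  | n + 1 => Int.fract (gaussIter ω n)⁻¹

/-- The partial quotients of the Gauss continued fraction algorithm:
`cfA ω 0 = a₀ = ⌊ω⌋`, `cfA ω (n+1) = a_{n+1} = ⌊1/ω_n⌋`. -/
noncomputable def cfA (ω : ℝ) : ℕ → ℤ
  | 0 => ⌊ω⌋
  | n + 1 => ⌊(gaussIter ω n)⁻¹⌋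

/-- Denominators of the convergents: `q₋₂ = 1`, `q₋₁ = 0`, `q_n = a_n q_{n-1} + q_{n-2}`
(so `q₀ = 1`, `q₁ = a₁`). They are positive integers. -/
noncomputable def qden (ω : ℝ) : ℕ → ℕ
  | 0 => 1
  | 1 => (cfA ω 1).toNat
  | n + 2 => (cfA ω (n + 2)).toNat * qden ω (n + 1) + qden ω n

/-- Numerators of the convergents: `p₋₂ = 0`, `p₋₁ = 1`, `p_n = a_n p_{n-1} + p_{n-2}`
(so `p₀ = a₀`, `p₁ = a₁ a₀ + 1`). -/
noncomputable def pnum (ω : ℝ) : ℕ → ℤ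
  | 0 => cfA ω 0
  | 1 => cfA ω 1 * cfA ω 0 + 1
  | n + 2 => cfA ω (n + 2) * pnum ω (n + 1) + pnum ω n

/-- The denominators viewed as real numbers. -/
noncomputable def qr (ω : ℝ) (n : ℕ) : ℝ := (qden ω n : ℝ)

section DavieAux

variable {ω : ℝ}

lemma davie_gauss_irrational (hω : Irrational ω) : ∀ n, Irrational (gaussIter ω n) := by
  intro n
  induction n with
  | zero => exact hω.sub_intCast ⌊ω⌋
  | succ m ih => exact (ih.inv).sub_intCast _

lemma davie_fract_mem_Ioo {x : ℝ} (h : Irrational x) : Int.fract x ∈ Set.Ioo (0:ℝ) 1 := by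
  refine ⟨?_, Int.fract_lt_one x⟩
  rcases lt_or_eq_of_le (Int.fract_nonneg x) with h' | h'
  · exact h'
  · exact absurd h'.symm (h.sub_intCast ⌊x⌋).ne_zero

lemma davie_gauss_mem (hω : Irrational ω) (n : ℕ) : gaussIter ω n ∈ Set.Ioo (0:ℝ) 1 := by
  cases n with
  | zero => exact davie_fract_mem_Ioo hω
  | succ m =>
    show Int.fract (gaussIter ω m)⁻¹ ∈ _
    exact davie_fract_mem_Ioo (davie_gauss_irrational hω m).inv

lemma davie_gauss_inv_gt_one (hω : Irrational ω) (n : ℕ) : 1 < (gaussIter ω n)⁻¹ := by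
  have h := davie_gauss_mem hω n
  exact (one_lt_inv₀ h.1).2 h.2

lemma davie_cfA_succ_pos (hω : Irrational ω) (n : ℕ) : 1 ≤ cfA ω (n + 1) := by
  show (1:ℤ) ≤ ⌊(gaussIter ω n)⁻¹⌋
  exact Int.le_floor.2 (by exact_mod_cast (davie_gauss_inv_gt_one hω n).le)

lemma davie_cfA_toNat (hω : Irrational ω) (n : ℕ) :
    ((cfA ω (n+1)).toNat : ℤ) = cfA ω (n+1) :=
  Int.toNat_of_nonneg (by linarith [davie_cfA_succ_pos hω n])

lemma davie_cfA_toNat_pos (hω : Irrational ω) (n : ℕ) : 1 ≤ (cfA ω (n+1)).toNat := by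
  have := davie_cfA_succ_pos hω n; omega

lemma davie_qden_pos (hω : Irrational ω) : ∀ n, 1 ≤ qden ω n
  | 0 => le_refl 1
  | 1 => davie_cfA_toNat_pos hω 0
  | n + 2 => by
    have h1 := davie_qden_pos hω (n+1)
    have h2 := davie_cfA_toNat_pos hω (n+1)
    show 1 ≤ (cfA ω (n + 2)).toNat * qden ω (n + 1) + qden ω n
    nlinarith [davie_qden_pos hω n]

lemma davie_qden_mono_succ (hω : Irrational ω) : ∀ n, qden ω n ≤ qden ω (n+1)
  | 0 => davie_qden_pos hω 1
  | n + 1 => by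
    show qden ω (n+1) ≤ (cfA ω (n + 2)).toNat * qden ω (n + 1) + qden ω n
    nlinarith [davie_cfA_toNat_pos hω (n+1), davie_qden_pos hω n, davie_qden_pos hω (n+1)]

lemma davie_qden_mono (hω : Irrational ω) : Monotone (qden ω) :=
  monotone_nat_of_le_succ (davie_qden_mono_succ hω)

lemma davie_qden_two_step (hω : Irrational ω) (n : ℕ) : 2 * qden ω n ≤ qden ω (n+2) := by
  show 2 * qden ω n ≤ (cfA ω (n + 2)).toNat * qden ω (n + 1) + qden ω n
  nlinarith [davie_cfA_toNat_pos hω (n+1), davie_qden_mono_succ hω n, davie_qden_pos hω n]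

lemma davie_two_pow_le_qden (hω : Irrational ω) : ∀ n, 2 ^ (n / 2) ≤ qden ω n := by
  intro n
  induction n using Nat.strong_induction_on with
  | _ n ih =>
    match n with
    | 0 => exact le_refl 1
    | 1 => exact davie_qden_pos hω 1
    | n + 2 =>
      have h1 := ih n (by omega)
      calc 2 ^ ((n+2)/2) = 2 * 2 ^ (n/2) := by
            rw [show (n+2)/2 = n/2 + 1 by omega]; ring
        _ ≤ 2 * qden ω n := by omega
        _ ≤ qden ω (n+2) := davie_qden_two_step hω n

lemma davie_qr_one_le (hω : Irrational ω) (k : ℕ) : (1:ℝ) ≤ qr ω k := by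
  have := davie_qden_pos hω k
  simp only [qr]; exact_mod_cast this

lemma davie_qr_pos (hω : Irrational ω) (k : ℕ) : (0:ℝ) < qr ω k :=
  lt_of_lt_of_le one_pos (davie_qr_one_le hω k)

lemma davie_qr_mono_succ (hω : Irrational ω) (k : ℕ) : qr ω k ≤ qr ω (k+1) := by
  have := davie_qden_mono_succ hω k
  simp only [qr]; exact_mod_cast this

lemma davie_qr_pow (hω : Irrational ω) (k : ℕ) : ((2:ℝ))^(k/2) ≤ qr ω k := by
  have := davie_two_pow_le_qden hω k
  simp only [qr]; exact_mod_cast this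

/-- error of the n-th convergent -/
noncomputable def betaD (ω : ℝ) (n : ℕ) : ℝ := qr ω n * ω - pnum ω n

/-- product of the Gauss iterates -/
noncomputable def Pprod (ω : ℝ) (n : ℕ) : ℝ := ∏ i ∈ Finset.range (n+1), gaussIter ω i

lemma davie_Pprod_succ (n : ℕ) : Pprod ω (n+1) = Pprod ω n * gaussIter ω (n+1) :=
  Finset.prod_range_succ _ _

lemma davie_Pprod_pos (hω : Irrational ω) (n : ℕ) : 0 < Pprod ω n :=
  Finset.prod_pos fun i _ => (davie_gauss_mem hω i).1

lemma davie_qr_succ_succ (hω : Irrational ω) (n : ℕ) :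
    qr ω (n+2) = (cfA ω (n+2) : ℝ) * qr ω (n+1) + qr ω n := by
  have h : (((cfA ω (n+2)).toNat : ℕ) : ℝ) = ((cfA ω (n+2) : ℤ) : ℝ) := by
    exact_mod_cast davie_cfA_toNat hω (n+1)
  show (((cfA ω (n + 2)).toNat * qden ω (n + 1) + qden ω n : ℕ) : ℝ) = _
  push_cast
  rw [h]
  rfl

lemma davie_gauss_succ_eq (n : ℕ) :
    gaussIter ω (n+1) = (gaussIter ω n)⁻¹ - cfA ω (n+1) := by
  show Int.fract (gaussIter ω n)⁻¹ = _
  rfl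

lemma davie_beta_eq (hω : Irrational ω) : ∀ n, betaD ω n = (-1)^n * Pprod ω n := by
  intro n
  induction n using Nat.strong_induction_on with
  | _ n ih =>
    match n with
    | 0 =>
      have hP : Pprod ω 0 = ω - (⌊ω⌋ : ℝ) := by
        show ∏ i ∈ Finset.range 1, gaussIter ω i = _
        rw [Finset.prod_range_one]
        rfl
      show (((1:ℕ)):ℝ) * ω - ((⌊ω⌋ : ℤ) : ℝ) = (-1)^0 * Pprod ω 0
      rw [hP]; push_cast; ring
    | 1 =>
      have h0 : gaussIter ω 0 = ω - (⌊ω⌋:ℝ) := rfl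
      have h1 : gaussIter ω 1 = (gaussIter ω 0)⁻¹ - (⌊(gaussIter ω 0)⁻¹⌋:ℝ) := rfl
      have hne : gaussIter ω 0 ≠ 0 := ne_of_gt (davie_gauss_mem hω 0).1
      have hinv := mul_inv_cancel₀ hne
      have hq1 : qr ω 1 = ((cfA ω 1 : ℤ) : ℝ) := by
        have h := davie_cfA_toNat hω 0
        show ((((cfA ω 1).toNat) : ℕ) : ℝ) = _
        exact_mod_cast h
      have hP : Pprod ω 1 = gaussIter ω 0 * gaussIter ω 1 := by
        show ∏ i ∈ Finset.range 2, gaussIter ω i = _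
        rw [Finset.prod_range_succ, Finset.prod_range_one]
      rw [show betaD ω 1 = qr ω 1 * ω - ((pnum ω 1 : ℤ) : ℝ) from rfl, hq1]
      show (⌊(gaussIter ω 0)⁻¹⌋ : ℝ) * ω - ((⌊(gaussIter ω 0)⁻¹⌋ * ⌊ω⌋ + 1 : ℤ) : ℝ)
        = (-1)^1 * Pprod ω 1
      rw [hP, h1]
      push_cast
      linear_combination hinv - (⌊(gaussIter ω 0)⁻¹⌋ : ℝ) * h0
    | n + 2 =>
      have ih1 := ih (n+1) (by omega)
      have ih0 := ih n (by omega)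
      have hrec : betaD ω (n+2) = (cfA ω (n+2) : ℝ) * betaD ω (n+1) + betaD ω n := by
        unfold betaD
        rw [davie_qr_succ_succ hω]
        rw [show pnum ω (n+2) = cfA ω (n + 2) * pnum ω (n + 1) + pnum ω n from rfl]
        push_cast
        ring
      have hP2 : Pprod ω (n+2) = Pprod ω (n+1) * gaussIter ω (n+2) := davie_Pprod_succ (n+1)
      have hP1 : Pprod ω (n+1) = Pprod ω n * gaussIter ω (n+1) := davie_Pprod_succ n
      have hg : gaussIter ω (n+2) = (gaussIter ω (n+1))⁻¹ - (cfA ω (n+2) : ℝ) :=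
        davie_gauss_succ_eq (n+1)
      have hne : gaussIter ω (n+1) ≠ 0 := ne_of_gt (davie_gauss_mem hω (n+1)).1
      have hinv := mul_inv_cancel₀ hne
      rw [hrec, ih1, ih0, hP2, hP1, hg]
      linear_combination (-((-1:ℝ)^n * Pprod ω n)) * hinv

lemma davie_det_eq (hω : Irrational ω) : ∀ n,
    pnum ω (n+1) * (qden ω n : ℤ) - pnum ω n * (qden ω (n+1) : ℤ) = (-1)^n := by
  intro n
  induction n with
  | zero =>
    show (cfA ω 1 * cfA ω 0 + 1) * ((1:ℕ) : ℤ) - cfA ω 0 * (((cfA ω 1).toNat : ℕ) : ℤ) = 1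
    rw [show (((cfA ω 1).toNat : ℕ) : ℤ) = (cfA ω 1).toNat from rfl, davie_cfA_toNat hω 0]
    push_cast
    ring
  | succ t ihq =>
    have hq : ((qden ω (t+2) : ℕ) : ℤ) = cfA ω (t+2) * (qden ω (t+1) : ℤ) + (qden ω t : ℤ) := by
      rw [show qden ω (t+2) = (cfA ω (t + 2)).toNat * qden ω (t + 1) + qden ω t from rfl]
      push_cast [davie_cfA_toNat hω (t+1)]
      ring
    rw [show pnum ω (t+2) = cfA ω (t + 2) * pnum ω (t + 1) + pnum ω t from rfl, hq, pow_succ]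
    linear_combination (-1 : ℤ) * ihq

lemma davie_qbeta (hω : Irrational ω) (n : ℕ) :
    qr ω (n+1) * betaD ω n - qr ω n * betaD ω (n+1) = (-1)^n := by
  have hd := davie_det_eq hω n
  have hdR : (pnum ω (n+1) : ℝ) * (qden ω n : ℝ) - (pnum ω n : ℝ) * (qden ω (n+1) : ℝ)
      = (-1)^n := by exact_mod_cast hd
  simp only [betaD, qr]
  linear_combination hdR

lemma davie_qprod_identity (hω : Irrational ω) (n : ℕ) :
    qr ω (n+1) * Pprod ω n + qr ω n * Pprod ω (n+1) = 1 := by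
  have h := davie_qbeta hω n
  rw [davie_beta_eq hω n, davie_beta_eq hω (n+1), pow_succ] at h
  have he : ((-1:ℝ)^n) * ((-1:ℝ)^n) = 1 := by
    rw [← pow_add, ← two_mul, pow_mul]; norm_num
  set e := (-1:ℝ)^n with hE
  linear_combination e * h - (qr ω (n+1) * Pprod ω n + qr ω n * Pprod ω (n+1) - 1) * he

lemma davie_Pprod_ge (hω : Irrational ω) (n : ℕ) :
    1 / (2 * qr ω (n+1)) ≤ Pprod ω n := by
  have hid := davie_qprod_identity hω n
  have hq1 : (1:ℝ) ≤ qr ω (n+1) := davie_qr_one_le hω (n+1)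
  have hqm : qr ω n ≤ qr ω (n+1) := davie_qr_mono_succ hω n
  have hP1 : Pprod ω (n+1) ≤ Pprod ω n := by
    rw [davie_Pprod_succ]
    have h1 := (davie_gauss_mem hω (n+1)).1
    have h2 := (davie_gauss_mem hω (n+1)).2
    nlinarith [davie_Pprod_pos hω n]
  have hq0 : (0:ℝ) < qr ω n := davie_qr_pos hω n
  rw [div_le_iff₀ (by linarith)]
  nlinarith [davie_Pprod_pos hω (n+1), davie_Pprod_pos hω n]

lemma davie_best_approx (hω : Irrational ω) (t : ℕ) (n : ℕ) (m : ℤ) (hn : 1 ≤ n)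
    (hlt : n < qden ω (t+1)) :
    1 / (2 * qr ω (t+1)) ≤ |(n:ℝ) * ω - (m:ℝ)| := by
  have hdet := davie_det_eq hω t
  have hε : ((-1:ℤ)^t) * ((-1:ℤ)^t) = 1 := by rw [← pow_add, ← two_mul, pow_mul]; norm_num
  set ε : ℤ := (-1)^t with hεdef
  set a : ℤ := ε * ((n:ℤ) * pnum ω (t+1) - m * (qden ω (t+1) : ℤ)) with hadef
  set b : ℤ := ε * (m * (qden ω t : ℤ) - (n:ℤ) * pnum ω t) with hbdef
  have ha : a * (qden ω t : ℤ) + b * (qden ω (t+1) : ℤ) = (n:ℤ) := by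
    rw [hadef, hbdef]; linear_combination (ε * (n:ℤ)) * hdet + (n:ℤ) * hε
  have hb : a * pnum ω t + b * pnum ω (t+1) = m := by
    rw [hadef, hbdef]; linear_combination (ε * m) * hdet + m * hε
  have haR : (a:ℝ) * (qden ω t : ℝ) + (b:ℝ) * (qden ω (t+1) : ℝ) = (n:ℝ) := by
    exact_mod_cast ha
  have hbR : (a:ℝ) * (pnum ω t : ℝ) + (b:ℝ) * (pnum ω (t+1) : ℝ) = (m:ℝ) := by
    exact_mod_cast hb
  have hreal : (n:ℝ) * ω - (m:ℝ) = (a:ℝ) * betaD ω t + (b:ℝ) * betaD ω (t+1) := by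
    simp only [betaD, qr]
    linear_combination (-ω) * haR + hbR
  rw [hreal, davie_beta_eq hω t, davie_beta_eq hω (t+1), pow_succ]
  have habs : |(a:ℝ) * ((-1:ℝ)^t * Pprod ω t) + (b:ℝ) * ((-1:ℝ)^t * (-1) * Pprod ω (t+1))|
      = |(a:ℝ) * Pprod ω t - (b:ℝ) * Pprod ω (t+1)| := by
    rw [show (a:ℝ) * ((-1:ℝ)^t * Pprod ω t) + (b:ℝ) * ((-1:ℝ)^t * (-1) * Pprod ω (t+1))
      = ((-1:ℝ)^t) * ((a:ℝ) * Pprod ω t - (b:ℝ) * Pprod ω (t+1)) by ring]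
    rw [abs_mul, abs_pow, abs_neg, abs_one, one_pow, one_mul]
  rw [habs]
  have hPt := davie_Pprod_pos hω t
  have hPt1 := davie_Pprod_pos hω (t+1)
  have hgoal : Pprod ω t ≤ |(a:ℝ) * Pprod ω t - (b:ℝ) * Pprod ω (t+1)| := by
    have hqt : (1:ℤ) ≤ (qden ω t : ℤ) := by exact_mod_cast davie_qden_pos hω t
    have hqt1 : (1:ℤ) ≤ (qden ω (t+1) : ℤ) := by exact_mod_cast davie_qden_pos hω (t+1)
    have hnZ : (1:ℤ) ≤ (n:ℤ) := by exact_mod_cast hn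
    have hltZ : (n:ℤ) < (qden ω (t+1) : ℤ) := by exact_mod_cast hlt
    rcases lt_trichotomy b 0 with hbneg | hbz | hbpos
    · have hbZ : b ≤ -1 := by omega
      have haZ : 1 ≤ a := by nlinarith
      have haR' : (1:ℝ) ≤ (a:ℝ) := by exact_mod_cast haZ
      have hbR' : (b:ℝ) ≤ -1 := by exact_mod_cast hbZ
      have : Pprod ω t ≤ (a:ℝ) * Pprod ω t - (b:ℝ) * Pprod ω (t+1) := by nlinarith
      exact this.trans (le_abs_self _)
    · rw [hbz] at ha
      have haZ : 1 ≤ a := by nlinarith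
      have haR' : (1:ℝ) ≤ (a:ℝ) := by exact_mod_cast haZ
      have hb0 : (b:ℝ) = 0 := by exact_mod_cast hbz
      have : Pprod ω t ≤ (a:ℝ) * Pprod ω t - (b:ℝ) * Pprod ω (t+1) := by
        rw [hb0]; nlinarith
      exact this.trans (le_abs_self _)
    · have hbZ : 1 ≤ b := by omega
      have haZ : a ≤ -1 := by nlinarith
      have haR' : (a:ℝ) ≤ -1 := by exact_mod_cast haZ
      have hbR' : (1:ℝ) ≤ (b:ℝ) := by exact_mod_cast hbZ
      have : Pprod ω t ≤ -((a:ℝ) * Pprod ω t - (b:ℝ) * Pprod ω (t+1)) := by nlinarith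
      exact this.trans (neg_le_abs _)
  exact le_trans (davie_Pprod_ge hω t) hgoal

end DavieAux

section DavieNorm

open Real

lemma davie_sin_sq_ge (y : ℝ) (hy : |y| ≤ 1/2) : 4 * y^2 ≤ Real.sin (π * y)^2 := by
  have hsin : 2 * |y| ≤ Real.sin (π * |y|) := by
    have h1 : (0:ℝ) ≤ π * |y| := by positivity
    have h2 : π * |y| ≤ π / 2 := by nlinarith [Real.pi_pos, abs_nonneg y]
    have h3 := Real.mul_le_sin h1 h2
    have hπ : (π:ℝ) ≠ 0 := ne_of_gt Real.pi_pos
    calc 2 * |y| = 2 / π * (π * |y|) := by field_simp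
      _ ≤ Real.sin (π * |y|) := h3
  have heq : Real.sin (π * |y|)^2 = Real.sin (π * y)^2 := by
    rcases abs_cases y with ⟨h, _⟩ | ⟨h, _⟩
    · rw [h]
    · rw [h, mul_neg, Real.sin_neg]; ring
  nlinarith [sq_abs y, abs_nonneg y]

lemma davie_norm_exp_ge (x : ℝ) (n : ℕ) :
    4 * |(n:ℝ) * x - round ((n:ℝ) * x)| ≤
      ‖Complex.exp (2 * Real.pi * Complex.I * x) ^ n - 1‖ := by
  set y : ℝ := (n:ℝ) * x - round ((n:ℝ) * x) with hy
  have hy2 : |y| ≤ 1/2 := abs_sub_round _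
  have hexp : Complex.exp (2 * Real.pi * Complex.I * x) ^ n
      = Complex.exp (((2 * π * y : ℝ) : ℂ) * Complex.I) := by
    rw [← Complex.exp_nat_mul]
    have h1 : (n:ℂ) * (2 * Real.pi * Complex.I * x)
        = ((2 * π * y : ℝ) : ℂ) * Complex.I
          + (round ((n:ℝ)*x) : ℤ) * (2 * Real.pi * Complex.I) := by
      push_cast [hy]; ring
    rw [h1, Complex.exp_add, Complex.exp_int_mul_two_pi_mul_I, mul_one]
  rw [hexp]
  set w := Complex.exp (((2 * π * y : ℝ) : ℂ) * Complex.I) - 1 with hw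
  have hre : w.re = Real.cos (2 * π * y) - 1 := by
    rw [hw, Complex.sub_re, Complex.exp_ofReal_mul_I_re, Complex.one_re]
  have him : w.im = Real.sin (2 * π * y) := by
    rw [hw, Complex.sub_im, Complex.exp_ofReal_mul_I_im, Complex.one_im, sub_zero]
  have hsq : ‖w‖^2 = (Real.cos (2 * π * y) - 1)^2 + (Real.sin (2 * π * y))^2 := by
    rw [← hre, ← him, Complex.sq_norm, Complex.normSq_apply]; ring
  have h16 : 16 * y^2 ≤ ‖w‖^2 := by
    rw [hsq]
    have hc : Real.cos (2 * π * y) = 2 * Real.cos (π * y)^2 - 1 := by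
      rw [show (2:ℝ) * π * y = 2 * (π * y) by ring]; exact Real.cos_two_mul _
    have hs1 : Real.sin (π * y)^2 + Real.cos (π * y)^2 = 1 := Real.sin_sq_add_cos_sq _
    have hs2 : Real.sin (2 * π * y)^2 + Real.cos (2 * π * y)^2 = 1 := Real.sin_sq_add_cos_sq _
    have hsin := davie_sin_sq_ge y hy2
    nlinarith [hsin]
  have h4 : (0:ℝ) ≤ ‖w‖ := norm_nonneg _
  nlinarith [abs_nonneg y, sq_abs y]

end DavieNorm

section DavieSums

open Real

lemma davie_geom_sum_bound (c : ℝ) (h0 : 0 ≤ c) (h1 : c < 1) (N : ℕ) :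
    ∑ j ∈ Finset.range N, c ^ j ≤ 1 / (1 - c) := by
  rw [geom_sum_eq (by linarith) N]
  have h2 : (0:ℝ) < 1 - c := by linarith
  have key : (c ^ N - 1) / (c - 1) = (1 - c ^ N) / (1 - c) := by
    rw [← neg_div_neg_eq]; ring_nf
  rw [key, div_le_div_iff₀ h2 h2]
  nlinarith [pow_nonneg h0 N]

lemma davie_half_pow_sum (c : ℝ) (N : ℕ) :
    ∑ k ∈ Finset.range (2 * N), c ^ (k / 2) = 2 * ∑ j ∈ Finset.range N, c ^ j := by
  induction N with
  | zero => simp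
  | succ M ih =>
    rw [show 2 * (M + 1) = 2 * M + 1 + 1 by ring, Finset.sum_range_succ, Finset.sum_range_succ,
      ih, Finset.sum_range_succ]
    rw [show (2 * M + 1) / 2 = M by omega, show (2 * M) / 2 = M by omega]
    ring

lemma davie_nat_half_pow_sum_le (c : ℝ) (h0 : 0 ≤ c) (h1 : c < 1) (N : ℕ) :
    ∑ k ∈ Finset.range N, c ^ (k / 2) ≤ 2 / (1 - c) := by
  have hmono : ∑ k ∈ Finset.range N, c ^ (k / 2)
      ≤ ∑ k ∈ Finset.range (2 * N), c ^ (k / 2) := by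
    apply Finset.sum_le_sum_of_subset_of_nonneg
    · exact Finset.range_subset_range.2 (by omega)
    · intro i _ _; positivity
  rw [davie_half_pow_sum] at hmono
  have h2 := davie_geom_sum_bound c h0 h1 N
  calc ∑ k ∈ Finset.range N, c ^ (k / 2) ≤ 2 * ∑ j ∈ Finset.range N, c ^ j := hmono
    _ ≤ 2 * (1 / (1 - c)) := by linarith
    _ = 2 / (1 - c) := by ring

lemma davie_sqrt2_lb : (1.4:ℝ) ≤ Real.sqrt 2 := by
  rw [show (1.4:ℝ) = Real.sqrt (1.4^2) by rw [Real.sqrt_sq (by norm_num)]]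
  exact Real.sqrt_le_sqrt (by norm_num)

lemma davie_invsqrt_sum_le {ω : ℝ} (hω : Irrational ω) (N : ℕ) :
    ∑ k ∈ Finset.range N, 1 / Real.sqrt (qr ω k) ≤ 8 := by
  have hc0 : (0:ℝ) ≤ (Real.sqrt 2)⁻¹ := by positivity
  have hs2 : (0:ℝ) < Real.sqrt 2 := by positivity
  have hc1 : (Real.sqrt 2)⁻¹ < 1 := by
    rw [inv_lt_one_iff₀]; right; linarith [davie_sqrt2_lb]
  have hterm : ∀ k, 1 / Real.sqrt (qr ω k) ≤ ((Real.sqrt 2)⁻¹) ^ (k / 2) := by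
    intro k
    have h1 : ((Real.sqrt 2) ^ (k/2) : ℝ) ≤ Real.sqrt (qr ω k) := by
      have hpow : ((2:ℝ))^(k/2) = ((Real.sqrt 2)^(k/2))^2 := by
        rw [← pow_mul, mul_comm (k/2) 2, pow_mul, Real.sq_sqrt (by norm_num : (0:ℝ) ≤ 2)]
      have h := Real.sqrt_le_sqrt (davie_qr_pow hω k)
      rwa [hpow, Real.sqrt_sq (by positivity)] at h
    have h2 : (0:ℝ) < (Real.sqrt 2) ^ (k/2) := by positivity
    rw [inv_pow]
    rw [one_div, inv_le_inv₀ (lt_of_lt_of_le h2 h1) h2]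
    exact h1
  calc ∑ k ∈ Finset.range N, 1 / Real.sqrt (qr ω k)
      ≤ ∑ k ∈ Finset.range N, ((Real.sqrt 2)⁻¹) ^ (k / 2) :=
        Finset.sum_le_sum fun k _ => hterm k
    _ ≤ 2 / (1 - (Real.sqrt 2)⁻¹) := davie_nat_half_pow_sum_le _ hc0 hc1 N
    _ ≤ 8 := by
        have h14 := davie_sqrt2_lb
        have h15 : (Real.sqrt 2)⁻¹ ≤ 1/1.4 := by
          rw [inv_le_comm₀ hs2 (by norm_num)]; linarith
        rw [div_le_iff₀ (by nlinarith)]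
        nlinarith

lemma davie_term_bound {ω : ℝ} (hω : Irrational ω) (k : ℕ) :
    (1 + qr ω k / max (qr ω k) (qr ω (k+1) / 4)) * Real.log (2 * qr ω (k+1)) / qr ω k ≤
      Real.log (qr ω (k+1)) / qr ω k + 13 / Real.sqrt (qr ω k) := by
  set Q := qr ω k with hQ
  set Q' := qr ω (k+1) with hQ'
  have hQ1 : (1:ℝ) ≤ Q := davie_qr_one_le hω k
  have hQ'1 : (1:ℝ) ≤ Q' := davie_qr_one_le hω (k+1)
  have hQQ' : Q ≤ Q' := davie_qr_mono_succ hω k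
  have hQ0 : (0:ℝ) < Q := by linarith
  have hQ'0 : (0:ℝ) < Q' := by linarith
  set M := max Q (Q'/4) with hM
  have hM1 : Q ≤ M := le_max_left _ _
  have hM2 : Q'/4 ≤ M := le_max_right _ _
  have hM0 : (0:ℝ) < M := lt_of_lt_of_le hQ0 hM1
  set L := Real.log (2 * Q') with hL
  have hLsplit : L = Real.log 2 + Real.log Q' := Real.log_mul (by norm_num) (by linarith)
  have hlog2 : Real.log 2 ≤ 1 := by
    have := Real.log_le_sub_one_of_pos (by norm_num : (0:ℝ) < 2); linarith
  have hlogQ'0 : 0 ≤ Real.log Q' := Real.log_nonneg hQ'1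
  have hL0 : 0 ≤ L := by rw [hLsplit]; positivity
  have hsQ0 : (0:ℝ) < Real.sqrt Q := Real.sqrt_pos.2 hQ0
  have hsQ'0 : (0:ℝ) < Real.sqrt Q' := Real.sqrt_pos.2 hQ'0
  have hsQ1 : (1:ℝ) ≤ Real.sqrt Q := by
    rw [show (1:ℝ) = Real.sqrt 1 by simp]; exact Real.sqrt_le_sqrt hQ1
  have hsQ'1 : (1:ℝ) ≤ Real.sqrt Q' := by
    rw [show (1:ℝ) = Real.sqrt 1 by simp]; exact Real.sqrt_le_sqrt hQ'1
  have hsqQ : Real.sqrt Q ^ 2 = Q := Real.sq_sqrt (le_of_lt hQ0)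
  have hsqQ' : Real.sqrt Q' ^ 2 = Q' := Real.sq_sqrt (le_of_lt hQ'0)
  have hsQle : Real.sqrt Q ≤ Q := by nlinarith
  have hsmono : Real.sqrt Q ≤ Real.sqrt Q' := Real.sqrt_le_sqrt hQQ'
  have hlogQ' : Real.log Q' ≤ 2 * Real.sqrt Q' := by
    have h1 := Real.log_le_sub_one_of_pos hsQ'0
    have h2 := Real.log_sqrt (le_of_lt hQ'0)
    nlinarith
  have step1 : (1 + Q/M) * L / Q = L/Q + L/M := by field_simp
  have step2 : L/M ≤ L*4/Q' := by
    have h1 : L/M ≤ L/(Q'/4) :=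
      div_le_div_of_nonneg_left hL0 (by linarith) hM2
    have h2 : L/(Q'/4) = L*4/Q' := by field_simp
    linarith [h2 ▸ h1]
  have step3 : L*4/Q' ≤ 12 / Real.sqrt Q' := by
    rw [div_le_div_iff₀ hQ'0 hsQ'0, hLsplit]
    nlinarith
  have step4 : (12:ℝ) / Real.sqrt Q' ≤ 12 / Real.sqrt Q :=
    div_le_div_of_nonneg_left (by norm_num) hsQ0 hsmono
  have step5 : L/Q = Real.log 2 / Q + Real.log Q' / Q := by rw [hLsplit, add_div]
  have step6 : Real.log 2 / Q ≤ 1 / Real.sqrt Q := by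
    apply div_le_div₀ (by norm_num) hlog2 hsQ0 hsQle
  have h13 : (13:ℝ) / Real.sqrt Q = 1 / Real.sqrt Q + 12 / Real.sqrt Q := by ring
  rw [step1, h13]
  linarith

end DavieSums

/-- Davie's lemma: there is a universal constant `γ₃ > 0` such that for
every Brjuno number `ω` (with `λ = e^{2πiω}`, convergent denominators `(q_k)`,
`k(n)` defined by `q_{k(n)} ≤ n < q_{k(n)+1}`) and nonnegative functions `g_k`
satisfying Davie's properties, the function
`K(n) = n log 2 + ∑_{k=0}^{k(n)} g_k(n) log(2 q_{k+1})` verifies: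
(1) `K(n) ≤ n (∑_{k=0}^{k(n)} log q_{k+1}/q_k + γ₃)`;
(2) `K(n₁) + K(n₂) ≤ K(n₁+n₂)`;
(3) `-log|λ^n - 1| ≤ K(n) - K(n-1)`. -/
theorem stmt18 :
    ∃ γ₃ > (0 : ℝ), ∀ ω : ℝ, Irrational ω →
      Summable (fun k : ℕ => Real.log (qr ω (k + 1)) / qr ω k) →
      ∀ g : ℕ → ℕ → ℝ,
        (∀ k n : ℕ, 0 ≤ g k n) →
        (∀ k : ℕ, g k 0 = 0) →
        (∀ k n : ℕ, g k n ≤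
          (1 + qr ω k / max (qr ω k) (qr ω (k + 1) / 4)) * n / qr ω k) →
        (∀ k n₁ n₂ : ℕ, g k n₁ + g k n₂ ≤ g k (n₁ + n₂)) →
        (∀ k : ℕ, ∀ n : ℕ, 1 ≤ n →
          |(n : ℝ) * ω - round ((n : ℝ) * ω)| ≤ 1 / (8 * qr ω k) →
          g k (n - 1) + 1 ≤ g k n) →
      ∀ kf : ℕ → ℕ, (∀ n : ℕ, 1 ≤ n → qden ω (kf n) ≤ n ∧ n < qden ω (kf n + 1)) →
      ∀ K : ℕ → ℝ,
        (∀ n : ℕ, K n = n * Real.log 2 +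
          ∑ k ∈ Finset.range (kf n + 1), g k n * Real.log (2 * qr ω (k + 1))) →
      (∀ n : ℕ, 1 ≤ n →
        K n ≤ n * ((∑ k ∈ Finset.range (kf n + 1), Real.log (qr ω (k + 1)) / qr ω k) + γ₃)) ∧
      (∀ n₁ n₂ : ℕ, K n₁ + K n₂ ≤ K (n₁ + n₂)) ∧
      (∀ n : ℕ, 1 ≤ n →
        -Real.log ‖Complex.exp (2 * Real.pi * Complex.I * ω) ^ n - 1‖ ≤ K n - K (n - 1)) := by
  classical
  refine ⟨200, by norm_num, ?_⟩
  intro ω hω _hsum g hg0 hgz hgb hgsup hgA kf hkf K hK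
  have hL0 : ∀ k : ℕ, 0 ≤ Real.log (2 * qr ω (k+1)) := by
    intro k
    apply Real.log_nonneg
    linarith [davie_qr_one_le hω (k+1)]
  have hK0 : K 0 = 0 := by
    rw [hK 0]
    simp [hgz]
  have hkfle : ∀ n₁ n : ℕ, 1 ≤ n₁ → 1 ≤ n → n₁ ≤ n → kf n₁ ≤ kf n := by
    intro n₁ n h1 h2 hle
    by_contra hc
    push_neg at hc
    have h3 : qden ω (kf n + 1) ≤ qden ω (kf n₁) := davie_qden_mono hω (by omega)
    have h4 := (hkf n₁ h1).1
    have h5 := (hkf n h2).2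
    omega
  -- the monotone difference bound
  have hdiff0 : ∀ k n : ℕ, 1 ≤ n → 0 ≤ g k n - g k (n-1) := by
    intro k n hn
    have h := hgsup k (n-1) 1
    rw [show n - 1 + 1 = n by omega] at h
    have := hg0 k 1
    linarith
  have hKdiff : ∀ n : ℕ, 1 ≤ n →
      Real.log 2 + ∑ k ∈ Finset.range (kf n + 1),
        (g k n - g k (n-1)) * Real.log (2 * qr ω (k+1)) ≤ K n - K (n-1) := by
    intro n hn
    have hsub : K (n-1) ≤ ((n:ℝ) - 1) * Real.log 2 +
        ∑ k ∈ Finset.range (kf n + 1), g k (n-1) * Real.log (2 * qr ω (k+1)) := by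
      rcases Nat.lt_or_ge n 2 with h2 | h2
      · have hn1 : n = 1 := by omega
        rw [hn1]
        show K 0 ≤ _
        rw [hK0]
        have : ∑ k ∈ Finset.range (kf 1 + 1), g k (1-1) * Real.log (2 * qr ω (k+1)) = 0 := by
          apply Finset.sum_eq_zero
          intro k _
          rw [show (1:ℕ) - 1 = 0 from rfl, hgz k, zero_mul]
        rw [this]
        norm_num
      · have hn1 : 1 ≤ n - 1 := by omega
        have hle : kf (n-1) ≤ kf n := hkfle (n-1) n hn1 hn (by omega)
        rw [hK (n-1)]
        have hcast : ((n - 1 : ℕ) : ℝ) = (n:ℝ) - 1 := by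
          push_cast [Nat.cast_sub hn]; ring
        rw [hcast]
        have hss : ∑ k ∈ Finset.range (kf (n-1) + 1), g k (n-1) * Real.log (2 * qr ω (k+1))
            ≤ ∑ k ∈ Finset.range (kf n + 1), g k (n-1) * Real.log (2 * qr ω (k+1)) := by
          apply Finset.sum_le_sum_of_subset_of_nonneg
          · exact Finset.range_subset_range.2 (by omega)
          · intro i _ _
            exact mul_nonneg (hg0 _ _) (hL0 i)
        linarith
    rw [hK n]
    have hsplit : ∑ k ∈ Finset.range (kf n + 1),
        (g k n - g k (n-1)) * Real.log (2 * qr ω (k+1))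
        = ∑ k ∈ Finset.range (kf n + 1), g k n * Real.log (2 * qr ω (k+1))
          - ∑ k ∈ Finset.range (kf n + 1), g k (n-1) * Real.log (2 * qr ω (k+1)) := by
      rw [← Finset.sum_sub_distrib]
      apply Finset.sum_congr rfl
      intro k _
      ring
    rw [hsplit]
    linarith
  have hlog2nn : (0:ℝ) ≤ Real.log 2 := Real.log_nonneg one_le_two
  refine ⟨?_, ?_, ?_⟩
  · -- Part (1)
    intro n hn
    rw [hK n]
    have hb1 : ∀ k ∈ Finset.range (kf n + 1),
        g k n * Real.log (2 * qr ω (k+1)) ≤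
          (n:ℝ) * (Real.log (qr ω (k+1)) / qr ω k + 13 / Real.sqrt (qr ω k)) := by
      intro k _
      have h1 := mul_le_mul_of_nonneg_right (hgb k n) (hL0 k)
      have h2 : (1 + qr ω k / max (qr ω k) (qr ω (k+1)/4)) * (n:ℝ) / qr ω k
            * Real.log (2 * qr ω (k+1))
          = (n:ℝ) * ((1 + qr ω k / max (qr ω k) (qr ω (k+1)/4))
            * Real.log (2 * qr ω (k+1)) / qr ω k) := by ring
      have h3 := davie_term_bound hω k
      calc g k n * Real.log (2 * qr ω (k+1))
          ≤ (1 + qr ω k / max (qr ω k) (qr ω (k+1)/4)) * (n:ℝ) / qr ω k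
            * Real.log (2 * qr ω (k+1)) := h1
        _ = (n:ℝ) * ((1 + qr ω k / max (qr ω k) (qr ω (k+1)/4))
            * Real.log (2 * qr ω (k+1)) / qr ω k) := h2
        _ ≤ (n:ℝ) * (Real.log (qr ω (k+1)) / qr ω k + 13 / Real.sqrt (qr ω k)) :=
            mul_le_mul_of_nonneg_left h3 (Nat.cast_nonneg n)
    have hsum := Finset.sum_le_sum hb1
    have heq : ∑ k ∈ Finset.range (kf n + 1),
        (n:ℝ) * (Real.log (qr ω (k+1)) / qr ω k + 13 / Real.sqrt (qr ω k))
        = (n:ℝ) * ((∑ k ∈ Finset.range (kf n + 1), Real.log (qr ω (k+1)) / qr ω k)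
          + ∑ k ∈ Finset.range (kf n + 1), 13 / Real.sqrt (qr ω k)) := by
      rw [← Finset.mul_sum, Finset.sum_add_distrib]
    have hBsum : ∑ k ∈ Finset.range (kf n + 1), 13 / Real.sqrt (qr ω k) ≤ 104 := by
      have h1 : ∑ k ∈ Finset.range (kf n + 1), 13 / Real.sqrt (qr ω k)
          = 13 * ∑ k ∈ Finset.range (kf n + 1), 1 / Real.sqrt (qr ω k) := by
        rw [Finset.mul_sum]
        apply Finset.sum_congr rfl
        intro k _
        ring
      rw [h1]
      linarith [davie_invsqrt_sum_le hω (kf n + 1)]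
    have hn0 : (0:ℝ) ≤ (n:ℝ) := Nat.cast_nonneg n
    have hlog2le : Real.log 2 ≤ 1 := by
      have := Real.log_le_sub_one_of_pos (by norm_num : (0:ℝ) < 2); linarith
    set Sig0 := ∑ k ∈ Finset.range (kf n + 1), Real.log (qr ω (k+1)) / qr ω k with hSig0
    calc (n:ℝ) * Real.log 2 + ∑ k ∈ Finset.range (kf n + 1),
          g k n * Real.log (2 * qr ω (k+1))
        ≤ (n:ℝ) * Real.log 2 + (n:ℝ) * (Sig0
          + ∑ k ∈ Finset.range (kf n + 1), 13 / Real.sqrt (qr ω k)) := by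
          rw [← heq]; linarith
      _ = (n:ℝ) * (Sig0 + (Real.log 2
          + ∑ k ∈ Finset.range (kf n + 1), 13 / Real.sqrt (qr ω k))) := by ring
      _ ≤ (n:ℝ) * (Sig0 + 200) := by
          apply mul_le_mul_of_nonneg_left _ hn0
          have : Real.log 2 + ∑ k ∈ Finset.range (kf n + 1), 13 / Real.sqrt (qr ω k)
              ≤ 200 := by linarith
          linarith
  · -- Part (2)
    intro n₁ n₂
    rcases Nat.eq_zero_or_pos n₁ with h1 | h1
    · subst h1
      rw [hK0, zero_add, zero_add]
    rcases Nat.eq_zero_or_pos n₂ with h2 | h2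
    · subst h2
      rw [hK0, add_zero, add_zero]
    have h12 : 1 ≤ n₁ + n₂ := by omega
    have hle1 : kf n₁ ≤ kf (n₁ + n₂) := hkfle n₁ (n₁+n₂) h1 h12 (by omega)
    have hle2 : kf n₂ ≤ kf (n₁ + n₂) := hkfle n₂ (n₁+n₂) h2 h12 (by omega)
    rw [hK n₁, hK n₂, hK (n₁ + n₂)]
    have hs1 : ∑ k ∈ Finset.range (kf n₁ + 1), g k n₁ * Real.log (2 * qr ω (k+1))
        ≤ ∑ k ∈ Finset.range (kf (n₁+n₂) + 1), g k n₁ * Real.log (2 * qr ω (k+1)) := by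
      apply Finset.sum_le_sum_of_subset_of_nonneg
      · exact Finset.range_subset_range.2 (by omega)
      · intro i _ _; exact mul_nonneg (hg0 _ _) (hL0 i)
    have hs2 : ∑ k ∈ Finset.range (kf n₂ + 1), g k n₂ * Real.log (2 * qr ω (k+1))
        ≤ ∑ k ∈ Finset.range (kf (n₁+n₂) + 1), g k n₂ * Real.log (2 * qr ω (k+1)) := by
      apply Finset.sum_le_sum_of_subset_of_nonneg
      · exact Finset.range_subset_range.2 (by omega)
      · intro i _ _; exact mul_nonneg (hg0 _ _) (hL0 i)
    have hs3 : ∑ k ∈ Finset.range (kf (n₁+n₂) + 1), g k n₁ * Real.log (2 * qr ω (k+1))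
        + ∑ k ∈ Finset.range (kf (n₁+n₂) + 1), g k n₂ * Real.log (2 * qr ω (k+1))
        ≤ ∑ k ∈ Finset.range (kf (n₁+n₂) + 1), g k (n₁+n₂) * Real.log (2 * qr ω (k+1)) := by
      rw [← Finset.sum_add_distrib]
      apply Finset.sum_le_sum
      intro k _
      have h := hgsup k n₁ n₂
      have hLk := hL0 k
      nlinarith
    push_cast
    linarith
  · -- Part (3)
    intro n hn
    have hkfn := hkf n hn
    set m : ℤ := round ((n:ℝ) * ω) with hm
    set ε : ℝ := |(n:ℝ) * ω - (m:ℝ)| with hε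
    have hεpos : 0 < ε := by
      have hirr : Irrational ((n:ℝ) * ω) := by
        exact hω.natCast_mul (m := n) (by omega)
      exact abs_pos.2 (hirr.sub_intCast m).ne_zero
    have hnorm : 4 * ε ≤ ‖Complex.exp (2 * Real.pi * Complex.I * ω) ^ n - 1‖ :=
      davie_norm_exp_ge ω n
    have hnormpos : 0 < ‖Complex.exp (2 * Real.pi * Complex.I * ω) ^ n - 1‖ := by
      linarith
    have hlog1 : -Real.log ‖Complex.exp (2 * Real.pi * Complex.I * ω) ^ n - 1‖
        ≤ -Real.log (4 * ε) := by
      have := Real.log_le_log (by positivity : (0:ℝ) < 4 * ε) hnorm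
      linarith
    have hba : 1 / (2 * qr ω (kf n + 1)) ≤ ε :=
      davie_best_approx hω (kf n) n m hn hkfn.2
    have hnotP : ¬ (ε ≤ 1 / (8 * qr ω (kf n + 1))) := by
      push_neg
      have hq := davie_qr_pos hω (kf n + 1)
      have : 1 / (8 * qr ω (kf n + 1)) < 1 / (2 * qr ω (kf n + 1)) := by
        apply one_div_lt_one_div_of_lt (by linarith)
        linarith
      linarith
    have hKd := hKdiff n hn
    by_cases hP0 : ε ≤ 1 / (8 * qr ω 0)
    · set P : ℕ → Prop := fun k => ε ≤ 1 / (8 * qr ω k) with hPdef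
      set j := Nat.findGreatest P (kf n) with hj
      have hj_le : j ≤ kf n := Nat.findGreatest_le _
      have hPj : P j := Nat.findGreatest_spec (Nat.zero_le _) hP0
      have hnotPj1 : ¬ P (j+1) := by
        rcases Nat.lt_or_ge j (kf n) with h | h
        · exact Nat.findGreatest_is_greatest (Nat.lt_succ_self j) (by omega)
        · have hjeq : j = kf n := by omega
          rw [hjeq]
          exact hnotP
      have hA := hgA j n hn hPj
      have hjmem : j ∈ Finset.range (kf n + 1) := Finset.mem_range.2 (by omega)
      have hsingle : Real.log (2 * qr ω (j+1)) ≤ ∑ k ∈ Finset.range (kf n + 1),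
          (g k n - g k (n-1)) * Real.log (2 * qr ω (k+1)) := by
        calc Real.log (2 * qr ω (j+1)) = 1 * Real.log (2 * qr ω (j+1)) := (one_mul _).symm
          _ ≤ (g j n - g j (n-1)) * Real.log (2 * qr ω (j+1)) :=
              mul_le_mul_of_nonneg_right (by linarith) (hL0 j)
          _ ≤ ∑ k ∈ Finset.range (kf n + 1),
              (g k n - g k (n-1)) * Real.log (2 * qr ω (k+1)) :=
              Finset.single_le_sum
                (fun k _ => mul_nonneg (hdiff0 k n hn) (hL0 k)) hjmem
      have hlogj : -Real.log (4 * ε) ≤ Real.log (2 * qr ω (j+1)) := by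
        have h2 : 1 / (8 * qr ω (j+1)) < ε := not_le.1 hnotPj1
        have h1 : (2 * qr ω (j+1))⁻¹ ≤ 4 * ε := by
          have hq := davie_qr_pos hω (j+1)
          have h3 : (2 * qr ω (j+1))⁻¹ = 4 * (1 / (8 * qr ω (j+1))) := by
            field_simp
            ring
          rw [h3]
          nlinarith
        have h5 : (0:ℝ) < (2 * qr ω (j+1))⁻¹ := by
          rw [inv_pos]; linarith [davie_qr_pos hω (j+1)]
        have h4 := Real.log_le_log h5 h1
        rw [Real.log_inv] at h4
        linarith
      linarith
    · have hqr0 : qr ω 0 = 1 := by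
        have : qden ω 0 = 1 := rfl
        simp [qr, this]
      push_neg at hP0
      rw [hqr0] at hP0
      have h1 : (2:ℝ)⁻¹ ≤ 4 * ε := by
        norm_num at hP0 ⊢
        linarith
      have h2 : -Real.log (4 * ε) ≤ Real.log 2 := by
        have h3 := Real.log_le_log (by norm_num : (0:ℝ) < 2⁻¹) h1
        rw [Real.log_inv] at h3
        linarith
      have hsum0 : 0 ≤ ∑ k ∈ Finset.range (kf n + 1),
          (g k n - g k (n-1)) * Real.log (2 * qr ω (k+1)) :=
        Finset.sum_nonneg fun k _ => mul_nonneg (hdiff0 k n hn) (hL0 k)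
      linarith
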